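/- Let n ≥ 1 and l ≥ 2 be integers and let P ∈ (ℤ/lℤ)^n. Then there exist an integer b not divisible by l and integers b₁, …, b_n with |b_j| ≤ l^{1−1/n} + 1 for every j (where l^{1−1/n} denotes the real power), such that b·P = (b₁ mod l, …, b_n mod l), i.e. b times the j-th component of P equals the residue class of b_j modulo l for every j. -/
import Mathlib


/-- For every point `P ∈ (ℤ/lℤ)^n` (`l ≥ 2`, `n ≥ 1`) there is an integer `b` not divisible
by `l` such that `b·P` has integer lifts `b₁,…,b_n` with `|b_j| ≤ l^{1−1/n} + 1`. -/
theorem sl2z_invariant_units_stmt7 (n l : ℕ) (hn : 1 ≤ n) (hl : 2 ≤ l)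
    (P : Fin n → ZMod l) :
    ∃ b : ℤ, ¬ (l : ℤ) ∣ b ∧ ∃ c : Fin n → ℤ,
      (∀ j, (|c j| : ℝ) ≤ (l : ℝ) ^ (1 - (1 : ℝ) / n) + 1) ∧
      ∀ j, (b : ZMod l) * P j = ((c j : ℤ) : ZMod l) := by
  haveI : NeZero l := ⟨by omega⟩
  set x : ℝ := (l : ℝ) ^ (1 - (1 : ℝ) / n) with hxdef
  have hl0 : (0:ℝ) ≤ (l:ℝ) := by positivity
  have hx0 : (0:ℝ) ≤ x := Real.rpow_nonneg hl0 _
  have hn0 : (n : ℝ) ≠ 0 := by positivity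
  -- x ^ n = l ^ (n-1)
  have hxn : x ^ n = (l : ℝ) ^ (n - 1 : ℕ) := by
    rw [hxdef, ← Real.rpow_natCast ((l:ℝ) ^ (1 - (1:ℝ)/n)) n, ← Real.rpow_mul hl0]
    have : (1 - (1:ℝ)/n) * n = ((n - 1 : ℕ) : ℝ) := by
      have : ((n - 1 : ℕ) : ℝ) = (n : ℝ) - 1 := by
        have := hn; push_cast [Nat.cast_sub this]; ring
      rw [this]; field_simp
    rw [this, Real.rpow_natCast]
  set s : ℕ := min (Nat.ceil x) (l - 1) with hsdef
  -- key cardinality inequality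
  have hcard : l ^ n < l * (s + 1) ^ n := by
    rcases le_or_gt (l - 1) (Nat.ceil x) with h | h
    · have hs : s = l - 1 := by simp [hsdef, min_eq_right h]
      have : s + 1 = l := by omega
      rw [this]
      calc l ^ n = 1 * l ^ n := by ring
        _ < l * l ^ n := by
            have : 0 < l ^ n := by positivity
            exact Nat.mul_lt_mul_of_lt_of_le (by omega) le_rfl this
    · have hs : s = Nat.ceil x := by simp [hsdef, min_eq_left h.le]
      have hxs : x ≤ (s : ℝ) := by rw [hs]; exact Nat.le_ceil x
      -- in ℝ : l^n = l * x^n ≤ l * s^n < l * (s+1)^n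
      have hreal : ((l : ℝ)) ^ n < (l : ℝ) * ((s : ℝ) + 1) ^ n := by
        have h1 : ((l:ℝ)) ^ n = (l : ℝ) * x ^ n := by
          rw [hxn]
          have : n = 1 + (n - 1) := by omega
          nth_rewrite 1 [this]
          rw [pow_add, pow_one]
        rw [h1]
        have h2 : x ^ n ≤ (s : ℝ) ^ n := pow_le_pow_left₀ hx0 hxs n
        have h3 : ((s:ℝ)) ^ n < ((s:ℝ) + 1) ^ n := by
          apply pow_lt_pow_left₀ (by linarith) (by positivity)
          omega
        have hlpos : (0:ℝ) < (l:ℝ) := by positivity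
        nlinarith
      have := hreal
      push_cast at this
      exact_mod_cast this
  -- pigeonhole
  have hcard' : Fintype.card (Fin n → ZMod l) <
      Fintype.card (ZMod l × (Fin n → Fin (s + 1))) := by
    simp [ZMod.card, Fintype.card_fun]
    exact hcard
  obtain ⟨p, q, hpq, hfeq⟩ := Fintype.exists_ne_map_eq_of_card_lt
    (fun (p : ZMod l × (Fin n → Fin (s + 1))) =>
      (fun j => p.1 * P j + ((p.2 j : ℕ) : ZMod l))) hcard'
  have hfe : ∀ j, p.1 * P j + ((p.2 j : ℕ) : ZMod l)
      = q.1 * P j + ((q.2 j : ℕ) : ZMod l) := fun j => congrFun hfeq j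
  -- p.1 ≠ q.1
  have hb : p.1 ≠ q.1 := by
    intro hb
    apply hpq
    have hc : p.2 = q.2 := by
      funext j
      have := hfe j
      rw [hb] at this
      have h2 : ((p.2 j : ℕ) : ZMod l) = ((q.2 j : ℕ) : ZMod l) := by
        exact add_left_cancel this
      have hlt1 : (p.2 j : ℕ) < l := by
        have := (p.2 j).isLt
        have hsl : s + 1 ≤ l := by
          have : s ≤ l - 1 := min_le_right _ _
          omega
        omega
      have hlt2 : (q.2 j : ℕ) < l := by
        have := (q.2 j).isLt
        have hsl : s + 1 ≤ l := by
          have : s ≤ l - 1 := min_le_right _ _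
          omega
        omega
      have := (ZMod.natCast_eq_natCast_iff' _ _ _).mp h2
      rw [Nat.mod_eq_of_lt hlt1, Nat.mod_eq_of_lt hlt2] at this
      exact Fin.ext this
    exact Prod.ext hb hc
  refine ⟨(p.1.val : ℤ) - (q.1.val : ℤ), ?_, fun j => ((q.2 j : ℕ) : ℤ) - ((p.2 j : ℕ) : ℤ), ?_, ?_⟩
  · -- not divisible
    intro hdvd
    have hne : (p.1.val : ℤ) - (q.1.val : ℤ) ≠ 0 := by
      intro h0
      apply hb
      have : p.1.val = q.1.val := by omega
      exact ZMod.val_injective l this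
    have habs : |(p.1.val : ℤ) - (q.1.val : ℤ)| < l := by
      have h1 : p.1.val < l := ZMod.val_lt p.1
      have h2 : q.1.val < l := ZMod.val_lt q.1
      rw [abs_sub_lt_iff]; omega
    have := Int.le_of_dvd (abs_pos.mpr hne) ((dvd_abs _ _).mpr hdvd)
    omega
  · -- bound
    intro j
    have h1 : (p.2 j : ℕ) ≤ s := by omega
    have h2 : (q.2 j : ℕ) ≤ s := by omega
    have habs : |((q.2 j : ℕ) : ℤ) - ((p.2 j : ℕ) : ℤ)| ≤ (s : ℤ) := by
      rw [abs_sub_le_iff]; omega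
    have hsx : (s : ℝ) ≤ x + 1 := by
      have : (s : ℝ) ≤ (Nat.ceil x : ℝ) := by
        exact_mod_cast min_le_left (Nat.ceil x) (l - 1)
      have h2 : (Nat.ceil x : ℝ) < x + 1 := Nat.ceil_lt_add_one hx0
      linarith
    have : (|((q.2 j : ℕ) : ℤ) - ((p.2 j : ℕ) : ℤ)| : ℝ) ≤ (s : ℝ) := by
      exact_mod_cast habs
    push_cast at this ⊢
    linarith
  · -- congruence
    intro j
    have h := hfe j
    push_cast
    rw [ZMod.natCast_val, ZMod.natCast_val, ZMod.cast_id, ZMod.cast_id]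
    linear_combination h
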